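/- Every semisimple COM is uniquely determined by its set of topes: if (E,L) and (E,L') are semisimple COMs with the same set of topes, then L = L'. -/

import Mathlib

/-- Composition of sign vectors: `(X ∘ Y) e = X e` if `X e ≠ 0`, else `Y e`. -/
def scomp {E : Type*} (X Y : E → SignType) : E → SignType :=
  fun e => if X e = 0 then Y e else X e

/-- The sign ordering: `0` below `+1` and `-1`, componentwise. -/
def sle {E : Type*} (X Y : E → SignType) : Prop :=
  ∀ e, X e = 0 ∨ X e = Y e

/-- The separator of two sign vectors. -/
def sep {E : Type*} (X Y : E → SignType) : Set E :=
  {e | X e * Y e = -1}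

/-- The support of a sign vector. -/
def support {E : Type*} (X : E → SignType) : Set E := {e | X e ≠ 0}

/-- Axiom (C): closure under composition. -/
def CompClosed {E : Type*} (L : Set (E → SignType)) : Prop :=
  ∀ X ∈ L, ∀ Y ∈ L, scomp X Y ∈ L

/-- Axiom (FS): face symmetry. -/
def FS {E : Type*} (L : Set (E → SignType)) : Prop :=
  ∀ X ∈ L, ∀ Y ∈ L, scomp X (fun e => -(Y e)) ∈ L

/-- Axiom (SE): strong elimination. -/
def SE {E : Type*} (L : Set (E → SignType)) : Prop :=
  ∀ X ∈ L, ∀ Y ∈ L, ∀ e ∈ sep X Y,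
    ∃ Z ∈ L, Z e = 0 ∧ ∀ f ∉ sep X Y, Z f = scomp X Y f

/-- A conditional oriented matroid. -/
def IsCOM {E : Type*} (L : Set (E → SignType)) : Prop :=
  L.Nonempty ∧ FS L ∧ SE L

/-- A tope: a maximal covector in the sign ordering. -/
def IsTope {E : Type*} (L : Set (E → SignType)) (X : E → SignType) : Prop :=
  X ∈ L ∧ ∀ Y ∈ L, sle X Y → Y = X

/-- The coordinates at which `L` is not nonzero-constant. -/
def Epm {E : Type*} (L : Set (E → SignType)) : Set E :=
  {e | ¬ (∀ X ∈ L, X e = 1) ∧ ¬ (∀ X ∈ L, X e = -1)}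

/-- Semisimplicity: restricted non-redundancy (RN1*) and (RN2*). -/
def Semisimple {E : Type*} (L : Set (E → SignType)) : Prop :=
  (∀ e ∈ Epm L, (∃ X ∈ L, X e = 1) ∧ (∃ X ∈ L, X e = -1) ∧ (∃ X ∈ L, X e = 0)) ∧
  (∀ e ∈ Epm L, ∀ f ∈ Epm L, e ≠ f →
    ∃ X ∈ L, ∃ Y ∈ L, X e * X f = 1 ∧ Y e * Y f = -1)

/-- The upset of a set of sign vectors in the sign ordering. -/
def upset {E : Type*} (L : Set (E → SignType)) : Set (E → SignType) :=
  {Y | ∃ X ∈ L, sle X Y}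


section MyAux
variable {E : Type*}

private lemma sg_mul_neg_self : ∀ s : SignType, s ≠ 0 → s * -s = -1 := by decide
private lemma sg_mul_self_ne : ∀ s : SignType, ¬ (s * s = -1) := by decide
private lemma sg_neg_ne : ∀ s : SignType, s ≠ 0 → -s ≠ 0 := by decide
private lemma sg_neg_zero : -(0 : SignType) = 0 := by decide
private lemma sg_zero_mul : ∀ s : SignType, ¬ ((0:SignType) * s = -1) := by decide

lemma compClosed_of_FS {L : Set (E → SignType)} (h : FS L) : CompClosed L := by
  intro X hX Y hY
  have h1 := h X hX Y hY
  have h2 := h X hX _ h1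
  have he : scomp X (fun e => -(scomp X (fun e => -(Y e)) e)) = scomp X Y := by
    funext e
    by_cases hx : X e = 0 <;> simp [scomp, hx]
  rwa [he] at h2

def ResZ (K : Set (E → SignType)) (a : E) : Set (E → SignType) := {Z | Z ∈ K ∧ Z a = 0}

lemma CC_ResZ {K : Set (E → SignType)} {a : E} (h : CompClosed K) : CompClosed (ResZ K a) := by
  rintro X ⟨hX, hXa⟩ Y ⟨hY, hYa⟩
  exact ⟨h X hX Y hY, by simp [scomp, hXa, hYa]⟩

lemma isTope_of_forallFull {K : Set (E → SignType)} {M : E → SignType}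
    (hM : M ∈ K) (hfull : ∀ h, (∃ Y ∈ K, Y h ≠ 0) → M h ≠ 0) : IsTope K M := by
  refine ⟨hM, fun Y hY hle => funext fun h => ?_⟩
  rcases hle h with h0 | heq
  · rw [h0]
    by_contra hne
    exact (hfull h ⟨Y, hY, hne⟩) h0
  · exact heq.symm

lemma tope_full {K : Set (E → SignType)} (hCC : CompClosed K) {M : E → SignType}
    (hM : IsTope K M) : ∀ h, (∃ Y ∈ K, Y h ≠ 0) → M h ≠ 0 := by
  rintro h ⟨Y, hY, hYh⟩
  have hc : scomp M Y ∈ K := hCC M hM.1 Y hY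
  have hle : sle M (scomp M Y) := by
    intro e
    by_cases h0 : M e = 0
    · exact Or.inl h0
    · exact Or.inr (by simp [scomp, h0])
  have heq := hM.2 _ hc hle
  intro hM0
  have h2 := congrFun heq h
  rw [show scomp M Y h = Y h from by simp [scomp, hM0], hM0] at h2
  exact hYh h2

lemma exists_full_tope [Fintype E] {K : Set (E → SignType)}
    (hCC : CompClosed K) (hne : K.Nonempty) : ∃ M, IsTope K M := by
  classical
  obtain ⟨M, hMK, hmax⟩ := Set.Finite.exists_maximalFor
    (fun Y : E → SignType => Finset.univ.filter (fun h => Y h ≠ 0)) K (Set.toFinite K) hne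
  refine ⟨M, isTope_of_forallFull hMK ?_⟩
  rintro h ⟨Y, hY, hYh⟩
  have hc : scomp M Y ∈ K := hCC M hMK Y hY
  have hsub : (Finset.univ.filter fun x => M x ≠ 0) ≤ (Finset.univ.filter fun x => scomp M Y x ≠ 0) := by
    intro x hx
    simp only [Finset.mem_filter, Finset.mem_univ, true_and] at hx ⊢
    simp only [scomp, if_neg hx]
    exact hx
  have heq := le_antisymm hsub (hmax hc hsub)
  have hmem : h ∈ Finset.univ.filter (fun x => scomp M Y x ≠ 0) := by
    simp only [Finset.mem_filter, Finset.mem_univ, true_and]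
    by_cases h0 : M h = 0
    · simp only [scomp, if_pos h0]; exact hYh
    · simp only [scomp, if_neg h0]; exact h0
  rw [← heq] at hmem
  simp only [Finset.mem_filter, Finset.mem_univ, true_and] at hmem
  exact hmem

end MyAux

section MyMain
variable {E : Type*}

/-- Key step: if `Y` composes all topes of a COM `K` into topes, `Y a = 0`, and
the zero-at-`a` part of `K` is nonempty, then `Y` composes topes of that part
into topes of that part. -/
lemma main_step [Fintype E] {K : Set (E → SignType)}
    (hCC : CompClosed K) (hFS : FS K) (hSE : SE K) (hne : K.Nonempty)
    {Y : E → SignType} {a : E} (hYa : Y a = 0)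
    (hY : ∀ M, IsTope K M → IsTope K (scomp Y M))
    {N : E → SignType} (hN : IsTope (ResZ K a) N) :
    IsTope (ResZ K a) (scomp Y N) := by
  classical
  by_cases hEa : ∃ P ∈ K, P a ≠ 0
  · -- main case
    obtain ⟨M₀, hM₀⟩ := exists_full_tope hCC hne
    have hM₀full := tope_full hCC hM₀
    have hM₀a : M₀ a ≠ 0 := hM₀full a hEa
    have hNK : N ∈ K := hN.1.1
    have hNa : N a = 0 := hN.1.2
    set M : E → SignType := scomp N M₀ with hMdef
    set M' : E → SignType := scomp N (fun h => -(M₀ h)) with hM'def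
    have hMK : M ∈ K := hCC N hNK M₀ hM₀.1
    have hM'K : M' ∈ K := hFS N hNK M₀ hM₀.1
    have hMt : IsTope K M := by
      refine isTope_of_forallFull hMK (fun h hh => ?_)
      by_cases hn : N h = 0
      · simp only [hMdef, scomp, if_pos hn]; exact hM₀full h hh
      · simp only [hMdef, scomp, if_neg hn]; exact hn
    have hM't : IsTope K M' := by
      refine isTope_of_forallFull hM'K (fun h hh => ?_)
      by_cases hn : N h = 0
      · simp only [hM'def, scomp, if_pos hn]; exact sg_neg_ne _ (hM₀full h hh)
      · simp only [hM'def, scomp, if_neg hn]; exact hn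
    set W : E → SignType := scomp Y M with hWdef
    set W' : E → SignType := scomp Y M' with hW'def
    have hWt : IsTope K W := hY M hMt
    have hW't : IsTope K W' := hY M' hM't
    have hWa : W a = M₀ a := by simp [hWdef, hMdef, scomp, hYa, hNa]
    have hW'a : W' a = -(M₀ a) := by simp [hW'def, hM'def, scomp, hYa, hNa]
    have haMem : a ∈ sep W W' := by
      show W a * W' a = -1
      rw [hWa, hW'a]
      exact sg_mul_neg_self _ hM₀a
    obtain ⟨Z, hZK, hZa, hZf⟩ := hSE W hWt.1 W' hW't.1 a haMem
    have key : Z = scomp Y N := by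
      funext h
      by_cases hy : Y h = 0
      · by_cases hn : N h = 0
        · have hsc : scomp Y N h = 0 := by simp [scomp, hy, hn]
          rw [hsc]
          by_cases hsep : h ∈ sep W W'
          · by_contra hZh
            exact (tope_full (CC_ResZ hCC) hN h ⟨Z, ⟨hZK, hZa⟩, hZh⟩) hn
          · have hWh : W h = M₀ h := by simp [hWdef, hMdef, scomp, hy, hn]
            have hW'h : W' h = -(M₀ h) := by simp [hW'def, hM'def, scomp, hy, hn]
            have hM0h : M₀ h = 0 := by
              by_contra hm
              exact hsep (show W h * W' h = -1 by
                rw [hWh, hW'h]; exact sg_mul_neg_self _ hm)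
            rw [hZf h hsep]
            simp [scomp, hWh, hW'h, hM0h]
        · have hWh : W h = N h := by simp [hWdef, hMdef, scomp, hy, hn]
          have hW'h : W' h = N h := by simp [hW'def, hM'def, scomp, hy, hn]
          have hsep : h ∉ sep W W' := by
            intro hs
            have : W h * W' h = -1 := hs
            rw [hWh, hW'h] at this
            exact sg_mul_self_ne _ this
          rw [hZf h hsep]
          simp [scomp, hWh, hW'h, hy, hn]
      · have hWh : W h = Y h := by simp [hWdef, scomp, hy]
        have hW'h : W' h = Y h := by simp [hW'def, scomp, hy]
        have hsep : h ∉ sep W W' := by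
          intro hs
          have : W h * W' h = -1 := hs
          rw [hWh, hW'h] at this
          exact sg_mul_self_ne _ this
        rw [hZf h hsep]
        simp [scomp, hWh, hW'h, hy]
    rw [← key]
    refine isTope_of_forallFull ⟨hZK, hZa⟩ (fun h hh => ?_)
    have hNh : N h ≠ 0 := tope_full (CC_ResZ hCC) hN h hh
    rw [key]
    by_cases hy : Y h = 0
    · simp only [scomp, if_pos hy]; exact hNh
    · simp only [scomp, if_neg hy]; exact hy
  · push_neg at hEa
    have hKK : ResZ K a = K := by
      ext Z
      exact ⟨fun h => h.1, fun h => ⟨h, hEa Z h⟩⟩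
    rw [hKK] at hN ⊢
    exact hY N hN

end MyMain

section MyTransfer
variable {E : Type*}

/-- Transfer of topes between two COMs with the same topes, after zeroing a coordinate. -/
lemma tope_transfer [Fintype E] {K₁ K₂ : Set (E → SignType)}
    (hCC₁ : CompClosed K₁) (hCC₂ : CompClosed K₂)
    (hFS₁ : FS K₁) (hSE₁ : SE K₁) (hFS₂ : FS K₂) (hSE₂ : SE K₂)
    (hne₁ : K₁.Nonempty) (hne₂ : K₂.Nonempty)
    (htop : {M | IsTope K₁ M} = {M | IsTope K₂ M})
    (a : E) (h2a : (ResZ K₂ a).Nonempty)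
    {P : E → SignType} (hP : IsTope (ResZ K₁ a) P) : IsTope (ResZ K₂ a) P := by
  obtain ⟨N', hN'⟩ := exists_full_tope (CC_ResZ hCC₂) h2a
  have hPK₁ : P ∈ K₁ := hP.1.1
  have hPa : P a = 0 := hP.1.2
  have hYP : ∀ M, IsTope K₂ M → IsTope K₂ (scomp P M) := by
    intro M hM
    have hM1 : IsTope K₁ M := (Set.ext_iff.mp htop M).mpr hM
    have hc : scomp P M ∈ K₁ := hCC₁ P hPK₁ M hM1.1
    have ht1 : IsTope K₁ (scomp P M) := by
      refine isTope_of_forallFull hc (fun h hh => ?_)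
      have hMh := tope_full hCC₁ hM1 h hh
      by_cases hp : P h = 0
      · simp only [scomp, if_pos hp]; exact hMh
      · simp only [scomp, if_neg hp]; exact hp
    exact (Set.ext_iff.mp htop _).mp ht1
  have h1 : IsTope (ResZ K₂ a) (scomp P N') :=
    main_step hCC₂ hFS₂ hSE₂ hne₂ hPa hYP hN'
  -- show scomp P N' = P by using that P h = 0 forces N' h = 0
  have hYN' : ∀ M, IsTope K₁ M → IsTope K₁ (scomp N' M) := by
    intro M hM1
    have hM2 : IsTope K₂ M := (Set.ext_iff.mp htop M).mp hM1
    have hN'K₂ : N' ∈ K₂ := hN'.1.1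
    have hc : scomp N' M ∈ K₂ := hCC₂ N' hN'K₂ M hM2.1
    have ht2 : IsTope K₂ (scomp N' M) := by
      refine isTope_of_forallFull hc (fun h hh => ?_)
      have hMh := tope_full hCC₂ hM2 h hh
      by_cases hp : N' h = 0
      · simp only [scomp, if_pos hp]; exact hMh
      · simp only [scomp, if_neg hp]; exact hp
    exact (Set.ext_iff.mp htop _).mpr ht2
  -- Note: we need CC/FS/SE of K₁ etc for the symmetric application
  have hPN' : scomp P N' = P := by
    funext h
    by_cases hp : P h = 0
    · simp only [scomp, if_pos hp]
      rw [hp]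
      by_contra hn
      -- h is in the "full set" of ResZ K₁ a via scomp N' P, but P is a tope there
      have h2 : IsTope (ResZ K₁ a) (scomp N' P) :=
        main_step hCC₁ hFS₁ hSE₁ hne₁ hN'.1.2 hYN' hP
      have hfull : (scomp N' P) h ≠ 0 := by
        simp only [scomp, if_neg hn]; exact hn
      exact (tope_full (CC_ResZ hCC₁) hP h ⟨scomp N' P, h2.1, hfull⟩) hp
    · simp only [scomp, if_neg hp]
  rwa [hPN'] at h1

end MyTransfer

section MyFinal
variable {E : Type*}

def Res (L : Set (E → SignType)) (S : Finset E) : Set (E → SignType) :=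
  {Y | Y ∈ L ∧ ∀ f ∈ S, Y f = 0}

lemma Res_empty (L : Set (E → SignType)) : Res L ∅ = L := by
  ext Y; simp [Res]

lemma Res_insert [DecidableEq E] (L : Set (E → SignType)) (a : E) (S : Finset E) :
    Res L (insert a S) = ResZ (Res L S) a := by
  ext Z
  constructor
  · rintro ⟨hZ, hz⟩
    exact ⟨⟨hZ, fun f hf => hz f (Finset.mem_insert_of_mem hf)⟩, hz a (Finset.mem_insert_self a S)⟩
  · rintro ⟨⟨hZ, hz⟩, hZa⟩
    refine ⟨hZ, fun f hf => ?_⟩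
    rcases Finset.mem_insert.mp hf with rfl | hf
    · exact hZa
    · exact hz f hf

lemma CC_Res {L : Set (E → SignType)} (h : CompClosed L) (S : Finset E) :
    CompClosed (Res L S) := by
  rintro X ⟨hX, hXz⟩ Y ⟨hY, hYz⟩
  exact ⟨h X hX Y hY, fun f hf => by simp [scomp, hXz f hf, hYz f hf]⟩

lemma FS_Res {L : Set (E → SignType)} (h : FS L) (S : Finset E) :
    FS (Res L S) := by
  rintro X ⟨hX, hXz⟩ Y ⟨hY, hYz⟩
  exact ⟨h X hX Y hY, fun f hf => by simp [scomp, hXz f hf, hYz f hf]⟩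

lemma SE_Res {L : Set (E → SignType)} (h : SE L) (S : Finset E) :
    SE (Res L S) := by
  rintro X ⟨hX, hXz⟩ Y ⟨hY, hYz⟩ e he
  obtain ⟨Z, hZ, hZe, hZf⟩ := h X hX Y hY e he
  refine ⟨Z, ⟨hZ, fun f hf => ?_⟩, hZe, hZf⟩
  have hfsep : f ∉ sep X Y := by
    intro hs
    have : X f * Y f = -1 := hs
    rw [hXz f hf] at this
    exact sg_zero_mul _ this
  rw [hZf f hfsep]
  simp [scomp, hXz f hf, hYz f hf]

lemma subset_of_same_topes [Fintype E] {L L' : Set (E → SignType)}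
    (hL : IsCOM L) (hL' : IsCOM L')
    (htopes : {X | IsTope L X} = {X | IsTope L' X}) : L ⊆ L' := by
  classical
  obtain ⟨hneL, hFSL, hSEL⟩ := hL
  obtain ⟨hneL', hFSL', hSEL'⟩ := hL'
  have hCCL := compClosed_of_FS hFSL
  have hCCL' := compClosed_of_FS hFSL'
  intro X hXL
  have inv : ∀ S : Finset E, (∀ f ∈ S, X f = 0) →
      (Res L' S).Nonempty ∧
      {M | IsTope (Res L S) M} = {M | IsTope (Res L' S) M} := by
    intro S
    induction S using Finset.induction_on with
    | empty =>
      intro _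
      rw [Res_empty, Res_empty]
      exact ⟨hneL', htopes⟩
    | @insert a S ha ih =>
      intro hz
      have hXa : X a = 0 := hz a (Finset.mem_insert_self a S)
      have hzS : ∀ f ∈ S, X f = 0 := fun f hf => hz f (Finset.mem_insert_of_mem hf)
      obtain ⟨hne2, htopS⟩ := ih hzS
      have hXRes : X ∈ Res L S := ⟨hXL, hzS⟩
      have hne1 : (Res L S).Nonempty := ⟨X, hXRes⟩
      have cc1 := CC_Res hCCL S
      have cc2 := CC_Res hCCL' S
      have fs1 := FS_Res hFSL S
      have fs2 := FS_Res hFSL' S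
      have se1 := SE_Res hSEL S
      have se2 := SE_Res hSEL' S
      have h1a : (ResZ (Res L S) a).Nonempty := ⟨X, hXRes, hXa⟩
      have h2a : (ResZ (Res L' S) a).Nonempty := by
        by_cases hEa : ∃ P ∈ Res L' S, P a ≠ 0
        · obtain ⟨M₀, hM₀⟩ := exists_full_tope cc2 hne2
          have hM₀a : M₀ a ≠ 0 := tope_full cc2 hM₀ a hEa
          have hM₀1 : IsTope (Res L S) M₀ := (Set.ext_iff.mp htopS M₀).mpr hM₀
          have hM₀full1 := tope_full cc1 hM₀1
          set Mm : E → SignType := scomp X M₀ with hMmdef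
          set Mm' : E → SignType := scomp X (fun h => -(M₀ h)) with hMm'def
          have hMm : Mm ∈ Res L S := cc1 X hXRes M₀ hM₀1.1
          have hMm' : Mm' ∈ Res L S := fs1 X hXRes M₀ hM₀1.1
          have hMmt : IsTope (Res L S) Mm := by
            refine isTope_of_forallFull hMm (fun h hh => ?_)
            by_cases hx : X h = 0
            · simp only [hMmdef, scomp, if_pos hx]; exact hM₀full1 h hh
            · simp only [hMmdef, scomp, if_neg hx]; exact hx
          have hMm't : IsTope (Res L S) Mm' := by
            refine isTope_of_forallFull hMm' (fun h hh => ?_)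
            by_cases hx : X h = 0
            · simp only [hMm'def, scomp, if_pos hx]; exact sg_neg_ne _ (hM₀full1 h hh)
            · simp only [hMm'def, scomp, if_neg hx]; exact hx
          have hMm2 : Mm ∈ Res L' S :=
            ((Set.ext_iff.mp htopS Mm).mp hMmt).1
          have hMm'2 : Mm' ∈ Res L' S :=
            ((Set.ext_iff.mp htopS Mm').mp hMm't).1
          have hsepa : a ∈ sep Mm Mm' := by
            show Mm a * Mm' a = -1
            have e1 : Mm a = M₀ a := by simp [hMmdef, scomp, hXa]
            have e2 : Mm' a = -(M₀ a) := by simp [hMm'def, scomp, hXa]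
            rw [e1, e2]
            exact sg_mul_neg_self _ hM₀a
          obtain ⟨Z, hZ, hZa, _⟩ := se2 Mm hMm2 Mm' hMm'2 a hsepa
          exact ⟨Z, hZ, hZa⟩
        · push_neg at hEa
          obtain ⟨Wv, hWv⟩ := hne2
          exact ⟨Wv, hWv, hEa Wv hWv⟩
      constructor
      · rw [Res_insert]; exact h2a
      · rw [Res_insert, Res_insert]
        ext P
        simp only [Set.mem_setOf_eq]
        constructor
        · exact fun hP => tope_transfer cc1 cc2 fs1 se1 fs2 se2 hne1 hne2 htopS a h2a hP
        · exact fun hP => tope_transfer cc2 cc1 fs2 se2 fs1 se1 hne2 hne1 htopS.symm a h1a hP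
  set S₀ : Finset E := Finset.univ.filter (fun f => X f = 0) with hS₀
  have hz : ∀ f ∈ S₀, X f = 0 := fun f hf => (Finset.mem_filter.mp hf).2
  obtain ⟨hne2, htopS⟩ := inv S₀ hz
  have hXt : IsTope (Res L S₀) X := by
    refine isTope_of_forallFull ⟨hXL, hz⟩ (fun h hh => ?_)
    intro hX0
    obtain ⟨Y, hY, hYh⟩ := hh
    exact hYh (hY.2 h (Finset.mem_filter.mpr ⟨Finset.mem_univ h, hX0⟩))
  exact ((Set.ext_iff.mp htopS X).mp hXt).1.1

end MyFinal

/-- a semisimple COM is determined by its set of topes. -/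
theorem semisimple_COM_determined_by_topes {E : Type*} [Fintype E]
    (L L' : Set (E → SignType))
    (hL : IsCOM L) (hL' : IsCOM L') (hsL : Semisimple L) (hsL' : Semisimple L')
    (htopes : {X | IsTope L X} = {X | IsTope L' X}) : L = L' :=
  Set.Subset.antisymm (subset_of_same_topes hL hL' htopes)
    (subset_of_same_topes hL' hL htopes.symm)
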